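/- We have (Σ_{i=0}^{s-1} X^i) · adj(Σ_{i=0}^{m-1} X^i) = (1 - t^n)^{m-2} · (I - X^s), where adj denotes the adjugate matrix and I is the m×m identity matrix. -/

import Mathlib

open Matrix Finset

namespace Stmt15Aux

open Fin.NatCast Fin.CommRing

def Cd (m : ℕ) (τ : ℂ) : Matrix (Fin m) (Fin m) ℂ :=
  Matrix.of fun i j => if (i : ℕ) + 1 = (j : ℕ) then 1
    else if (i : ℕ) = m - 1 ∧ (j : ℕ) = 0 then τ else 0

def wt (k : ℕ) (τ : ℂ) (i : Fin (k + 1)) : ℂ := if i = Fin.last k then τ else 1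

lemma prod_wt (k : ℕ) (τ : ℂ) : ∏ x : Fin (k + 1), wt k τ x = τ := by
  unfold wt
  rw [Finset.prod_eq_single_of_mem (Fin.last k) (Finset.mem_univ _)
    (fun x _ hx => if_neg hx), if_pos rfl]

lemma Cd_apply (k : ℕ) (τ : ℂ) (i j : Fin (k + 1)) :
    Cd (k + 1) τ i j = if j = i + 1 then wt k τ i else 0 := by
  rcases eq_or_ne i (Fin.last k) with hi | hi
  · have h1 : ¬ ((i : ℕ) + 1 = (j : ℕ)) := by
      have := j.isLt
      subst hi
      simp only [Fin.val_last]
      omega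
    have h2 : (j = i + 1) ↔ ((j : ℕ) = 0) := by
      subst hi
      rw [Fin.last_add_one]
      constructor
      · rintro rfl; rfl
      · intro h; exact Fin.ext (by simpa using h)
    have h3 : (i : ℕ) = k + 1 - 1 := by subst hi; simp
    show (if (i : ℕ) + 1 = (j : ℕ) then 1
      else if (i : ℕ) = k + 1 - 1 ∧ (j : ℕ) = 0 then τ else 0) = _
    rw [if_neg h1, wt, if_pos hi]
    by_cases hj : (j : ℕ) = 0
    · rw [if_pos ⟨h3, hj⟩, if_pos (h2.mpr hj)]
    · rw [if_neg (fun h => hj h.2), if_neg (fun h => hj (h2.mp h))]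
  · have hlt : (i : ℕ) < k := by
      have h1 := i.isLt
      have h2 : (i : ℕ) ≠ k := fun h => hi (Fin.ext (by simpa using h))
      omega
    have h2 : (j = i + 1) ↔ ((i : ℕ) + 1 = (j : ℕ)) := by
      have hval : ((i + 1 : Fin (k + 1)) : ℕ) = (i : ℕ) + 1 :=
        Fin.val_add_one_of_lt (by rw [Fin.lt_iff_val_lt_val, Fin.val_last]; omega)
      constructor
      · rintro rfl; rw [hval]
      · intro h; exact Fin.ext (by rw [hval, ← h])
    have h3 : ¬ ((i : ℕ) = k + 1 - 1) := by omega
    show (if (i : ℕ) + 1 = (j : ℕ) then 1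
      else if (i : ℕ) = k + 1 - 1 ∧ (j : ℕ) = 0 then τ else 0) = _
    rw [wt, if_neg hi]
    by_cases hj : j = i + 1
    · rw [if_pos (h2.mp hj), if_pos hj]
    · rw [if_neg (fun h => hj (h2.mpr h)), if_neg (fun h => h3 h.1), if_neg hj]

lemma Cd_pow_apply (k : ℕ) (τ : ℂ) (n : ℕ) (i j : Fin (k + 1)) :
    (Cd (k + 1) τ ^ n) i j =
      if j = i + (n : Fin (k + 1)) then ∏ l ∈ range n, wt k τ (i + (l : Fin (k + 1)))
      else 0 := by
  induction n generalizing j with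
  | zero =>
    simp only [pow_zero, Matrix.one_apply, Nat.cast_zero, add_zero, range_zero,
      prod_empty]
    exact if_congr eq_comm rfl rfl
  | succ b ih =>
    rw [pow_succ, Matrix.mul_apply]
    rw [Finset.sum_eq_single (i + (b : Fin (k + 1)))]
    · rw [ih, if_pos rfl, Cd_apply, mul_ite, mul_zero, prod_range_succ]
      refine if_congr ?_ rfl rfl
      rw [Nat.cast_succ, ← add_assoc]
    · intro x _ hx
      rw [ih, if_neg hx, zero_mul]
    · intro h; exact absurd (Finset.mem_univ _) h

lemma Cd_pow_card (k : ℕ) (τ : ℂ) :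
    Cd (k + 1) τ ^ (k + 1) = τ • (1 : Matrix (Fin (k + 1)) (Fin (k + 1)) ℂ) := by
  ext i j
  rw [Cd_pow_apply, Fin.natCast_self, add_zero]
  have hp : ∏ l ∈ range (k + 1), wt k τ (i + (l : Fin (k + 1))) = τ := by
    rw [← Fin.prod_univ_eq_prod_range (fun l : ℕ => wt k τ (i + (l : Fin (k + 1))))]
    simp only [Fin.cast_val_eq_self]
    rw [show (∏ x : Fin (k + 1), wt k τ (i + x)) = ∏ x : Fin (k + 1), wt k τ x from
      Fintype.prod_equiv (Equiv.addLeft i) _ _ (fun x => rfl), prod_wt]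
  rw [hp, Matrix.smul_apply, Matrix.one_apply, smul_ite, smul_eq_mul, mul_one,
    smul_zero]
  exact if_congr eq_comm rfl rfl

lemma rot_pow (k a : ℕ) (i : Fin (k + 1)) :
    ((finRotate (k + 1)) ^ a) i = i + (a : Fin (k + 1)) := by
  induction a generalizing i with
  | zero => simp
  | succ b ih =>
    rw [pow_succ, Equiv.Perm.mul_apply, finRotate_succ_apply, ih, Nat.cast_succ]
    ring

lemma only_two {I : Type*} [DecidableEq I] [Fintype I] (σ τ : Equiv.Perm I)
    (hcyc : σ.IsCycle) (hmove : ∀ i, σ i ≠ i) (h : ∀ i, τ i = i ∨ τ i = σ i)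
    (hne : τ ≠ 1) : τ = σ := by
  have hS : ∀ i, τ i ≠ i → τ (σ i) ≠ σ i := by
    intro i hi hsi
    have hτi : τ i = σ i := (h i).resolve_left hi
    exact hmove i (τ.injective (by rw [hτi, hsi])).symm
  obtain ⟨i₀, hi₀⟩ : ∃ i, τ i ≠ i := by
    by_contra hc
    push_neg at hc
    exact hne (Equiv.ext fun x => by rw [hc x]; rfl)
  have hiter : ∀ a : ℕ, τ ((σ ^ a) i₀) ≠ (σ ^ a) i₀ := by
    intro a
    induction a with
    | zero => simpa using hi₀
    | succ b ih =>
      rw [pow_succ', Equiv.Perm.mul_apply]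
      exact hS _ ih
  have hall : ∀ j, τ j ≠ j := by
    intro j
    obtain ⟨a, ha⟩ := hcyc.exists_pow_eq (hmove i₀) (hmove j)
    rw [← ha]
    exact hiter a
  exact Equiv.ext fun j => (h j).resolve_left (hall j)


lemma det_one_sub (k n : ℕ) (hk : 1 ≤ k) (hn : 0 < n) (hco : Nat.Coprime (k + 1) n)
    (τ : ℂ) :
    ((1 : Matrix (Fin (k + 1)) (Fin (k + 1)) ℂ) - Cd (k + 1) τ ^ n).det = 1 - τ ^ n := by
  set ν : Fin (k + 1) := (n : Fin (k + 1)) with hνdef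
  have hν : ν ≠ 0 := by
    rw [hνdef, Ne, Fin.natCast_eq_zero]
    intro hdvd
    have h1 : (k + 1) ∣ Nat.gcd (k + 1) n := Nat.dvd_gcd dvd_rfl hdvd
    rw [Nat.Coprime.gcd_eq_one hco] at h1
    have := Nat.le_of_dvd one_pos h1
    omega
  set u : Fin (k + 1) → ℂ := fun i => ∏ l ∈ range n, wt k τ (i + (l : Fin (k + 1)))
    with hudef
  have hM : ∀ a b : Fin (k + 1),
      ((1 : Matrix (Fin (k + 1)) (Fin (k + 1)) ℂ) - Cd (k + 1) τ ^ n) a b =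
        (if a = b then (1 : ℂ) else 0) - (if b = a + ν then u a else 0) := by
    intro a b
    rw [Matrix.sub_apply, Matrix.one_apply, Cd_pow_apply]
  set σ : Equiv.Perm (Fin (k + 1)) := finRotate (k + 1) ^ n with hσdef
  have hσ : ∀ i, σ i = i + ν := fun i => rot_pow k n i
  set π : Equiv.Perm (Fin (k + 1)) := σ⁻¹ with hπdef
  have hπ : ∀ i, π i = i - ν := by
    intro i
    apply σ.injective
    rw [hπdef, ← Equiv.Perm.mul_apply, mul_inv_cancel, Equiv.Perm.one_apply, hσ, sub_add_cancel]
  have hπmove : ∀ i, π i ≠ i := by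
    intro i h
    rw [hπ i, sub_eq_self] at h
    exact hν h
  have hπne1 : π ≠ 1 := fun h => hπmove 0 (by rw [h]; rfl)
  have hcycσ : σ.IsCycle := by
    refine (isCycle_finRotate_of_le (by omega)).pow_iff.mpr ?_
    rw [(isCycle_finRotate_of_le (by omega)).orderOf,
      support_finRotate_of_le (by omega), card_univ, Fintype.card_fin]
    exact hco.symm
  have hπcyc : π.IsCycle := hcycσ.inv
  rw [Matrix.det_apply']
  rw [← Finset.sum_subset
    (Finset.subset_univ ({1, π} : Finset (Equiv.Perm (Fin (k + 1))))) ?_]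
  swap
  · intro x _ hx
    rw [Finset.mem_insert, Finset.mem_singleton] at hx
    push_neg at hx
    obtain ⟨hx1, hxπ⟩ := hx
    suffices h : ∃ i, ((1 : Matrix (Fin (k + 1)) (Fin (k + 1)) ℂ)
        - Cd (k + 1) τ ^ n) (x i) i = 0 by
      obtain ⟨i, hi⟩ := h
      rw [Finset.prod_eq_zero
        (f := fun j => ((1 : Matrix (Fin (k + 1)) (Fin (k + 1)) ℂ)
          - Cd (k + 1) τ ^ n) (x j) j) (mem_univ i) hi, mul_zero]
    by_contra hall
    push_neg at hall
    refine hxπ (only_two π x hπcyc hπmove ?_ hx1)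
    intro i
    have hne := hall i
    rw [hM] at hne
    by_cases h1 : x i = i
    · exact Or.inl h1
    · right
      by_cases h2 : i = x i + ν
      · rw [hπ, eq_sub_iff_add_eq]
        exact h2.symm
      · exact absurd (by rw [if_neg h1, if_neg h2, sub_zero]) hne
  rw [Finset.sum_pair (Ne.symm hπne1)]
  have hterm1 : ((Equiv.Perm.sign (1 : Equiv.Perm (Fin (k + 1))) : ℤ) : ℂ) *
      ∏ i, ((1 : Matrix (Fin (k + 1)) (Fin (k + 1)) ℂ) - Cd (k + 1) τ ^ n) i i
      = 1 := by
    rw [Equiv.Perm.sign_one]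
    rw [Finset.prod_eq_one]
    · norm_num
    · intro i _
      rw [hM, if_pos rfl, if_neg (fun h => hν (left_eq_add.mp h)), sub_zero]
  have hprodu : ∏ i, u i = τ ^ n := by
    rw [hudef]
    rw [Finset.prod_comm]
    have hinner : ∀ l : ℕ, ∏ i : Fin (k + 1), wt k τ (i + (l : Fin (k + 1))) = τ := by
      intro l
      rw [show (∏ i : Fin (k + 1), wt k τ (i + (l : Fin (k + 1))))
          = ∏ i : Fin (k + 1), wt k τ i from
        Fintype.prod_equiv (Equiv.addRight ((l : Fin (k + 1)))) _ _ (fun x => rfl),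
        prod_wt]
    rw [Finset.prod_congr rfl (fun l _ => hinner l), Finset.prod_const, card_range]
  have hterm2 : ∏ i, ((1 : Matrix (Fin (k + 1)) (Fin (k + 1)) ℂ)
      - Cd (k + 1) τ ^ n) (π i) i = (-1 : ℂ) ^ (k + 1) * τ ^ n := by
    have hentry : ∀ i, ((1 : Matrix (Fin (k + 1)) (Fin (k + 1)) ℂ)
        - Cd (k + 1) τ ^ n) (π i) i = -1 * u (i - ν) := by
      intro i
      rw [hM, hπ, if_neg (fun h => hν (sub_eq_self.mp h)),
        if_pos (sub_add_cancel i ν).symm, zero_sub, neg_one_mul]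
    rw [Finset.prod_congr rfl (fun i _ => hentry i), Finset.prod_mul_distrib,
      Finset.prod_const, card_univ, Fintype.card_fin]
    congr 1
    rw [show (∏ i : Fin (k + 1), u (i - ν)) = ∏ i : Fin (k + 1), u i from
      Fintype.prod_equiv (Equiv.subRight ν) _ _ (fun x => rfl)]
    exact hprodu
  have hsign : ((Equiv.Perm.sign π : ℤ) : ℂ) = (-1 : ℂ) ^ (k * n) := by
    rw [hπdef, Equiv.Perm.sign_inv, hσdef, map_pow, sign_finRotate]
    push_cast
    rw [← pow_mul]
  simp only [Equiv.Perm.one_apply]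
  rw [hterm1, hterm2, hsign]
  have hpar : Even (k * n + (k + 1 + 1)) := by
    rcases Nat.even_or_odd k with he | ho
    · exact (he.mul_right n).add (he.add even_two)
    · have hnodd : Odd n := by
        rcases Nat.even_or_odd n with hne | hno
        · exfalso
          have h2 : 2 ∣ Nat.gcd (k + 1) n :=
            Nat.dvd_gcd (ho.add_one.two_dvd) hne.two_dvd
          rw [hco] at h2
          omega
        · exact hno
      have : Odd (k * n) := ho.mul hnodd
      obtain ⟨a, ha⟩ := this
      obtain ⟨b, hb⟩ := ho
      exact ⟨a + b + 2, by omega⟩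
  have hfin : (-1 : ℂ) ^ (k * n) * ((-1 : ℂ) ^ (k + 1)) = -1 := by
    have : (-1 : ℂ) ^ (k * n) * ((-1 : ℂ) ^ (k + 1)) * (-1 : ℂ) =
        (-1 : ℂ) ^ (k * n + (k + 1 + 1)) := by
      rw [pow_add, pow_add, pow_one]
      ring
    have h2 : (-1 : ℂ) ^ (k * n + (k + 1 + 1)) = 1 := hpar.neg_one_pow
    rw [← this] at h2
    have := mul_right_cancel₀ (by norm_num : (-1 : ℂ) ≠ 0)
      (h2.trans (by norm_num : (1 : ℂ) = -1 * -1))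
    linear_combination this
  calc 1 + (-1 : ℂ) ^ (k * n) * ((-1 : ℂ) ^ (k + 1) * τ ^ n)
      = 1 + ((-1 : ℂ) ^ (k * n) * (-1 : ℂ) ^ (k + 1)) * τ ^ n := by ring
    _ = 1 - τ ^ n := by rw [hfin]; ring


lemma generic {m : ℕ} (hm : 2 ≤ m) (s' : ℕ) (D : ℂ) (hD : D ≠ 0)
    (X : Matrix (Fin m) (Fin m) ℂ)
    (hXm : X ^ m = (1 - D) • (1 : Matrix (Fin m) (Fin m) ℂ))
    (hdet : ((1 : Matrix (Fin m) (Fin m) ℂ) - X).det = D) :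
    (∑ i ∈ range s', X ^ i) * Matrix.adjugate (∑ i ∈ range m, X ^ i) =
      D ^ (m - 2) • ((1 : Matrix (Fin m) (Fin m) ℂ) - X ^ s') := by
  set A : Matrix (Fin m) (Fin m) ℂ := ∑ i ∈ range m, X ^ i with hA
  have honesub : (1 : Matrix (Fin m) (Fin m) ℂ) - X ^ m
      = D • (1 : Matrix (Fin m) (Fin m) ℂ) := by
    rw [hXm, sub_smul, one_smul]
    abel
  have hleft : ((1 : Matrix (Fin m) (Fin m) ℂ) - X) * A
      = D • (1 : Matrix (Fin m) (Fin m) ℂ) := by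
    have := mul_geom_sum X m
    calc ((1 : Matrix (Fin m) (Fin m) ℂ) - X) * A = -((X - 1) * A) := by
          rw [← neg_sub, neg_mul]
      _ = -(X ^ m - 1) := by rw [mul_geom_sum]
      _ = D • 1 := by rw [neg_sub, honesub]
  have hright : A * ((1 : Matrix (Fin m) (Fin m) ℂ) - X)
      = D • (1 : Matrix (Fin m) (Fin m) ℂ) := by
    calc A * ((1 : Matrix (Fin m) (Fin m) ℂ) - X) = -(A * (X - 1)) := by
          rw [← neg_sub, mul_neg]
      _ = -(X ^ m - 1) := by rw [geom_sum_mul]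
      _ = D • 1 := by rw [neg_sub, honesub]
  have hdetA : A.det = D ^ (m - 1) := by
    have h1 : D * A.det = D ^ m := by
      have := congrArg Matrix.det hleft
      rwa [Matrix.det_mul, hdet, Matrix.det_smul, Matrix.det_one, mul_one,
        Fintype.card_fin] at this
    have h2 : D ^ m = D * D ^ (m - 1) := by
      rw [← pow_succ']
      congr 1
      omega
    rw [h2] at h1
    exact mul_left_cancel₀ hD h1
  have hunit : IsUnit A.det := by
    rw [hdetA]
    exact (pow_ne_zero _ hD).isUnit
  haveI := A.invertibleOfIsUnitDet hunit
  have hadj : Matrix.adjugate A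
      = D ^ (m - 2) • ((1 : Matrix (Fin m) (Fin m) ℂ) - X) := by
    apply Matrix.mul_right_injective_of_invertible A
    show A * A.adjugate = A * (D ^ (m - 2) • ((1 : Matrix (Fin m) (Fin m) ℂ) - X))
    rw [Matrix.mul_adjugate, hdetA, Matrix.mul_smul, hright, smul_smul]
    rw [show D ^ (m - 2) * D = D ^ (m - 1) by
      rw [← pow_succ]; congr 1; omega]
  rw [hadj, Matrix.mul_smul]
  congr 1
  calc (∑ i ∈ range s', X ^ i) * ((1 : Matrix (Fin m) (Fin m) ℂ) - X)
      = -((∑ i ∈ range s', X ^ i) * (X - 1)) := by rw [← neg_sub, mul_neg]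
    _ = 1 - X ^ s' := by rw [geom_sum_mul, neg_sub]

lemma cont_Cd (m : ℕ) : Continuous fun τ : ℂ => Cd m τ := by
  apply continuous_matrix
  intro i j
  simp only [Cd, Matrix.of_apply]
  split_ifs
  · exact continuous_const
  · exact continuous_id
  · exact continuous_const

lemma cont_pow {A : ℂ → Matrix (Fin m) (Fin m) ℂ} (hA : Continuous A) (a : ℕ) :
    Continuous fun τ => (A τ) ^ a := by
  induction a with
  | zero => simpa only [pow_zero] using continuous_const
  | succ b ih => simpa only [pow_succ] using ih.matrix_mul hA

lemma main (m n : ℕ) (hm : 2 ≤ m) (hn : 1 < n) (hmn : Nat.Coprime m n) (s' : ℕ)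
    (t : ℂ) :
    (∑ i ∈ range s', (Cd m t ^ n) ^ i) *
        Matrix.adjugate (∑ i ∈ range m, (Cd m t ^ n) ^ i) =
      (1 - t ^ n) ^ (m - 2) • ((1 : Matrix (Fin m) (Fin m) ℂ) - (Cd m t ^ n) ^ s') := by
  have hXn : Continuous fun τ : ℂ => Cd m τ ^ n := cont_pow (cont_Cd m) n
  have hF : Continuous fun τ : ℂ => (∑ i ∈ range s', (Cd m τ ^ n) ^ i) *
      Matrix.adjugate (∑ i ∈ range m, (Cd m τ ^ n) ^ i) := by
    refine Continuous.matrix_mul ?_ (Continuous.matrix_adjugate ?_)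
    · exact continuous_finset_sum _ (fun i _ => cont_pow hXn i)
    · exact continuous_finset_sum _ (fun i _ => cont_pow hXn i)
  have hG : Continuous fun τ : ℂ => (1 - τ ^ n) ^ (m - 2) •
      ((1 : Matrix (Fin m) (Fin m) ℂ) - (Cd m τ ^ n) ^ s') := by
    refine Continuous.fun_smul ?_ ?_
    · exact (continuous_const.sub (continuous_pow n)).pow _
    · exact continuous_const.sub (cont_pow hXn s')
  have hfin : Set.Finite {τ : ℂ | τ ^ n = 1} := by
    refine Set.Finite.subset (Polynomial.finite_setOf_isRoot
      (p := (Polynomial.X : Polynomial ℂ) ^ n - Polynomial.C 1)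
      (Polynomial.X_pow_sub_C_ne_zero (by omega) 1)) ?_
    intro x hx
    simp only [Set.mem_setOf_eq] at hx ⊢
    simp [Polynomial.IsRoot, sub_eq_zero, hx]
  have hdense : Dense {τ : ℂ | τ ^ n = 1}ᶜ := hfin.countable.dense_compl ℂ
  obtain ⟨k, rfl⟩ : ∃ k, m = k + 1 := ⟨m - 1, by omega⟩
  have heq := Continuous.ext_on hdense hF hG ?_
  · exact congrFun heq t
  · intro τ hτ
    have hτn : τ ^ n ≠ 1 := hτ
    have hD : (1 : ℂ) - τ ^ n ≠ 0 := sub_ne_zero.mpr (Ne.symm hτn)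
    refine generic hm s' (1 - τ ^ n) hD (Cd (k + 1) τ ^ n) ?_ ?_
    · rw [← pow_mul, mul_comm, pow_mul, Cd_pow_card, smul_pow, one_pow]
      congr 1
      ring
    · exact det_one_sub k n (by omega) (by omega) hmn τ

end Stmt15Aux

open Stmt15Aux in
theorem stmt_15 (m n : ℕ) (hm : 1 < m) (hn : 1 < n) (hmn : Nat.Coprime m n)
    (r s : ℤ) (hbezout : (m : ℤ) * r + (n : ℤ) * s = 1)
    (hr₁ : -(n : ℤ) < r) (hr₂ : r < 0) (hs₁ : 0 < s) (hs₂ : s < (m : ℤ))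
    (t : ℂ)
    (C X : Matrix (Fin m) (Fin m) ℂ)
    (hC : ∀ i j : Fin m, C i j =
      if (i : ℕ) + 1 = (j : ℕ) then 1
      else if (i : ℕ) = m - 1 ∧ (j : ℕ) = 0 then t else 0)
    (hX : X = C ^ n) :
    (∑ i ∈ Finset.range s.toNat, X ^ i) *
        Matrix.adjugate (∑ i ∈ Finset.range m, X ^ i) =
      (1 - t ^ n) ^ (m - 2) • ((1 : Matrix (Fin m) (Fin m) ℂ) - X ^ s.toNat) := by
  have hCeq : C = Cd m t := by
    ext i j
    rw [hC]
    rfl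
  subst hX hCeq
  exact main m n hm hn hmn s.toNat t
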